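/- If Player I has no winning strategy in the reaping game with respect to A ⊆ [ω]^ω, then |A| ≥ 𝔯 and |A| ≥ 𝔡. Hence the minimal cardinality of a family A with this property is at least max{𝔯, 𝔡}. -/

import Mathlib

open Cardinal

/-- `B` reaps `X`: `B ⊆* X` or `B ⊆* ω ∖ X`. -/
def Reaps (B X : Set ℕ) : Prop := (B \ X).Finite ∨ (B ∩ X).Finite

/-- Player II wins a play of the reaping game with respect to `A`:
`n` is Player I's (strictly increasing) sequence of moves, `i` Player II's moves. -/
def IIWinsReaping (A : Set (Set ℕ)) (n : ℕ → ℕ) (i : ℕ → Bool) : Prop :=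
  ∃ B ∈ A, Set.range n ∩ B = {m | ∃ k, i k = true ∧ n k = m} ∧ Reaps B (Set.range n)

/-- Player I has a winning strategy in the reaping game with respect to `A`:
a strategy producing strictly increasing (legal) plays that always defeats Player II. -/
def IWinStratReaping (A : Set (Set ℕ)) : Prop :=
  ∃ σ : List Bool → ℕ, ∀ i : ℕ → Bool,
    StrictMono (fun k => σ ((List.range k).map i)) ∧
    ¬ IIWinsReaping A (fun k => σ ((List.range k).map i)) i

/-- The reaping number 𝔯. -/
noncomputable def frakR : Cardinal :=
  sInf { c | ∃ R : Set (Set ℕ), (∀ B ∈ R, B.Infinite) ∧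
    (∀ x : Set ℕ, ∃ B ∈ R, Reaps B x) ∧ #R = c }

/-- The dominating number 𝔡. -/
noncomputable def frakD : Cardinal :=
  sInf { c | ∃ D : Set (ℕ → ℕ),
    (∀ x : ℕ → ℕ, ∃ y ∈ D, ∀ᶠ n in Filter.atTop, x n ≤ y n) ∧ #D = c }

/-! ### Auxiliary machinery -/

/-- A fast strictly monotone majorant of `f`. -/
private def FF (f : ℕ → ℕ) (n : ℕ) : ℕ := n + 1 + ∑ j ∈ Finset.range (n + 1), f j

private lemma FF_lt (f : ℕ → ℕ) (n : ℕ) : n < FF f n := by unfold FF; omega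

private lemma FF_f (f : ℕ → ℕ) (n : ℕ) : f n < FF f n := by
  have : f n ≤ ∑ j ∈ Finset.range (n + 1), f j :=
    Finset.single_le_sum (fun _ _ => Nat.zero_le _) (Finset.self_mem_range_succ n)
  unfold FF; omega

private lemma FF_smono (f : ℕ → ℕ) : StrictMono (FF f) := by
  apply strictMono_nat_of_lt_succ
  intro n
  unfold FF
  rw [Finset.sum_range_succ (n := n + 1)]
  omega

private def gstep (f : ℕ → ℕ) (v : ℕ) (b : Bool) : ℕ :=
  if b then FF f (FF f (v + 1)) else v + 1

private lemma gstep_gt (f : ℕ → ℕ) (v : ℕ) (b : Bool) : v < gstep f v b := by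
  cases b with
  | false => simp [gstep]
  | true =>
      simp only [gstep, if_pos]
      exact lt_trans (lt_trans (Nat.lt_succ_self v) (FF_lt f _)) (FF_lt f _)

private def strat (f : ℕ → ℕ) (l : List Bool) : ℕ := l.foldl (gstep f) 0

private lemma play_succ (f : ℕ → ℕ) (i : ℕ → Bool) (k : ℕ) :
    strat f ((List.range (k + 1)).map i) = gstep f (strat f ((List.range k).map i)) (i k) := by
  rw [List.range_succ, List.map_append]
  simp [strat]

private lemma play_smono (f : ℕ → ℕ) (i : ℕ → Bool) :
    StrictMono (fun k => strat f ((List.range k).map i)) := by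
  apply strictMono_nat_of_lt_succ
  intro k
  rw [play_succ]
  exact gstep_gt f _ _

private def ones (i : ℕ → Bool) (k : ℕ) : ℕ :=
  ((Finset.range k).filter (fun j => i j = true)).card

private lemma grow (f : ℕ → ℕ) (i : ℕ → Bool) :
    ∀ m k, i k = true → ones i k = m → 1 ≤ m →
      FF f (2 * m) ≤ strat f ((List.range k).map i) := by
  intro m
  induction m using Nat.strong_induction_on with
  | _ m IH =>
    intro k hk hok hm
    set T : Finset ℕ := (Finset.range k).filter (fun j => i j = true) with hT
    have hTcard : T.card = m := hok
    have hTne : T.Nonempty := Finset.card_pos.mp (by omega)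
    set j := T.max' hTne with hj
    have hjT : j ∈ T := T.max'_mem hTne
    have hjk : j < k := Finset.mem_range.mp (Finset.mem_filter.mp hjT).1
    have hij : i j = true := (Finset.mem_filter.mp hjT).2
    -- ones i j = m - 1
    have hTj : (Finset.range (j + 1)).filter (fun t => i t = true) = T := by
      ext t
      simp only [Finset.mem_filter, Finset.mem_range, hT]
      constructor
      · rintro ⟨ht, hit⟩; exact ⟨lt_of_le_of_lt (Nat.lt_succ_iff.mp ht) hjk, hit⟩
      · rintro ⟨ht, hit⟩
        refine ⟨Nat.lt_succ_of_le (T.le_max' t ?_), hit⟩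
        exact Finset.mem_filter.mpr ⟨Finset.mem_range.mpr ht, hit⟩
    have honesj : ones i j = m - 1 := by
      have h1 : (Finset.range (j + 1)).filter (fun t => i t = true)
          = insert j ((Finset.range j).filter (fun t => i t = true)) := by
        rw [Finset.range_add_one, Finset.filter_insert, if_pos hij]
      have h2 : j ∉ (Finset.range j).filter (fun t => i t = true) := by
        simp [Finset.mem_filter]
      have := congrArg Finset.card h1
      rw [hTj, hTcard, Finset.card_insert_of_notMem h2] at this
      unfold ones; omega
    have hstep : strat f ((List.range (j + 1)).map i)
        = FF f (FF f (strat f ((List.range j).map i) + 1)) := by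
      rw [play_succ, gstep, if_pos hij]
    have hkey : 2 * m ≤ FF f (strat f ((List.range j).map i) + 1) := by
      rcases Nat.lt_or_ge m 2 with hm2 | hm2
      · have : m = 1 := by omega
        subst this
        have := FF_lt f (strat f ((List.range j).map i) + 1)
        omega
      · have hIH := IH (m - 1) (by omega) j hij honesj (by omega)
        have h3 := FF_lt f (2 * (m - 1))
        have h4 := FF_lt f (strat f ((List.range j).map i) + 1)
        omega
    calc FF f (2 * m) ≤ FF f (FF f (strat f ((List.range j).map i) + 1)) :=
          (FF_smono f).monotone hkey
      _ = strat f ((List.range (j + 1)).map i) := hstep.symm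
      _ ≤ strat f ((List.range k).map i) := (play_smono f i).monotone hjk

private lemma exists_dominating (A : Set (Set ℕ)) (hA : ∀ B ∈ A, B.Infinite)
    (h : ¬ IWinStratReaping A) (f : ℕ → ℕ) :
    ∃ B ∈ A, ∀ᶠ m in Filter.atTop, f m ≤ Nat.nth (· ∈ B) m := by
  classical
  obtain ⟨i, hi⟩ : ∃ i, IIWinsReaping A (fun k => strat f ((List.range k).map i)) i := by
    by_contra hc
    push_neg at hc
    exact h ⟨strat f, fun i => ⟨play_smono f i, hc i⟩⟩
  set nn : ℕ → ℕ := fun k => strat f ((List.range k).map i) with hnn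
  obtain ⟨B, hBA, hPm, hreap⟩ := hi
  have hBinf := hA B hBA
  have hsm : StrictMono nn := play_smono f i
  have hinj : Function.Injective nn := hsm.injective
  have hIm : Set.range nn ∩ B = nn '' {k | i k = true} := by
    rw [hPm]
    ext m
    simp only [Set.mem_image, Set.mem_setOf_eq]
  rcases hreap with hfin | hfin
  · -- B ⊆* range nn : the enumeration of B dominates f
    set c := hfin.toFinset.card with hc
    refine ⟨B, hBA, Filter.eventually_atTop.mpr ⟨2 * c + 2, ?_⟩⟩
    intro m hm
    have hBinf' : {x | x ∈ B}.Infinite := by rwa [Set.setOf_mem_eq]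
    set b := Nat.nth (· ∈ B) m with hb
    have hbB : b ∈ B := Nat.nth_mem_of_infinite hBinf' m
    have hcount : Nat.count (· ∈ B) b = m := Nat.count_nth_of_infinite hBinf' m
    set Tb : Finset ℕ := (Finset.range b).filter (· ∈ B) with hTbdef
    have hTb : Tb.card = m := by
      rw [← hcount, Nat.count_eq_card_filter_range]
    set Tp : Finset ℕ := Tb.filter (· ∈ Set.range nn) with hTpdef
    have hTpsub : Tp ⊆ Tb := Finset.filter_subset _ _
    have hsdiff : Tb \ Tp ⊆ hfin.toFinset := by
      intro x hx
      rw [Finset.mem_sdiff] at hx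
      obtain ⟨hx1, hx2⟩ := hx
      have hxB : x ∈ B := (Finset.mem_filter.mp hx1).2
      have hxN : x ∉ Set.range nn := by
        intro hxr
        exact hx2 (Finset.mem_filter.mpr ⟨hx1, hxr⟩)
      simp only [Set.Finite.mem_toFinset, Set.mem_diff]
      exact ⟨hxB, hxN⟩
    have hTpcard : m ≤ Tp.card + c := by
      have h1 : (Tb \ Tp).card = Tb.card - Tp.card := Finset.card_sdiff_of_subset hTpsub
      have h2 : (Tb \ Tp).card ≤ c := Finset.card_le_card hsdiff
      have h3 : Tp.card ≤ Tb.card := Finset.card_le_card hTpsub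
      omega
    have hTpne : Tp.Nonempty := Finset.card_pos.mp (by omega)
    set p := Tp.max' hTpne with hp
    have hpTp : p ∈ Tp := Tp.max'_mem hTpne
    have hpb : p < b := Finset.mem_range.mp (Finset.mem_filter.mp (hTpsub hpTp)).1
    have hpB : p ∈ B := (Finset.mem_filter.mp (hTpsub hpTp)).2
    have hpN : p ∈ Set.range nn := (Finset.mem_filter.mp hpTp).2
    obtain ⟨k, hnk⟩ := hpN
    have hik : i k = true := by
      have hpim : p ∈ nn '' {k | i k = true} := by
        rw [← hIm]; exact ⟨⟨k, hnk⟩, hpB⟩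
      obtain ⟨k', hk', hnk'⟩ := hpim
      have : k' = k := hinj (hnk'.trans hnk.symm)
      rwa [← this]
    set Tp' : Finset ℕ := (Finset.range p).filter
      (fun q => q ∈ B ∧ q ∈ Set.range nn) with hTp'def
    have hTpd : Tp = insert p Tp' := by
      ext q
      simp only [hTpdef, hTbdef, Finset.mem_filter, Finset.mem_range,
        Finset.mem_insert, hTp'def]
      constructor
      · rintro ⟨⟨hq1, hq2⟩, hq3⟩
        have hqp : q ≤ p := Tp.le_max' q (by
          simp only [hTpdef, hTbdef, Finset.mem_filter, Finset.mem_range]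
          exact ⟨⟨hq1, hq2⟩, hq3⟩)
        rcases eq_or_lt_of_le hqp with he | hl
        · exact Or.inl he
        · exact Or.inr ⟨hl, hq2, hq3⟩
      · rintro (rfl | ⟨hq1, hq2, hq3⟩)
        · exact ⟨⟨hpb, hpB⟩, ⟨k, hnk⟩⟩
        · exact ⟨⟨hq1.trans hpb, hq2⟩, hq3⟩
    have hpnot : p ∉ Tp' := by simp [hTp'def]
    have hTp'card : m ≤ Tp'.card + 1 + c := by
      have := congrArg Finset.card hTpd
      rw [Finset.card_insert_of_notMem hpnot] at this
      omega
    -- Tp'.card = ones i k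
    have hcardones : Tp'.card = ones i k := by
      unfold ones
      symm
      apply Finset.card_bij (fun a _ => nn a)
      · intro a ha
        rw [Finset.mem_filter, Finset.mem_range] at ha
        obtain ⟨hak, hia⟩ := ha
        have hmem : nn a ∈ nn '' {k | i k = true} := ⟨a, hia, rfl⟩
        rw [← hIm] at hmem
        simp only [hTp'def, Finset.mem_filter, Finset.mem_range]
        exact ⟨hnk ▸ hsm hak, hmem.2, hmem.1⟩
      · intro a₁ _ a₂ _ heq
        exact hinj heq
      · intro q hq
        simp only [hTp'def, Finset.mem_filter, Finset.mem_range] at hq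
        obtain ⟨hqp, hqB, hqN⟩ := hq
        have hqim : q ∈ nn '' {k | i k = true} := by
          rw [← hIm]; exact ⟨hqN, hqB⟩
        obtain ⟨a, hia, hna⟩ := hqim
        refine ⟨a, ?_, hna⟩
        rw [Finset.mem_filter, Finset.mem_range]
        refine ⟨?_, hia⟩
        have : nn a < nn k := by rw [hna, hnk]; exact hqp
        exact hsm.lt_iff_lt.mp this
    -- conclude
    have hones1 : m ≤ 2 * (Tp'.card) + 2 := by omega
    have hgrow : FF f (2 * ones i k) ≤ nn k :=
      grow f i (ones i k) k hik rfl (by omega)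
    have hmle : m ≤ 2 * ones i k := by omega
    have hchain : FF f m ≤ b := by
      calc FF f m ≤ FF f (2 * ones i k) := (FF_smono f).monotone hmle
        _ ≤ nn k := hgrow
        _ = p := hnk
        _ ≤ b := le_of_lt hpb
    exact le_of_lt (lt_of_lt_of_le (FF_f f m) hchain)
  · -- B ∩ range nn finite : impossible
    exfalso
    have hSfin : ({k | i k = true} : Set ℕ).Finite := by
      have h1 : (nn '' {k | i k = true}).Finite := by
        rw [← hIm, Set.inter_comm]; exact hfin
      exact Set.Finite.of_finite_image h1 hinj.injOn
    obtain ⟨K, hK⟩ := hSfin.bddAbove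
    have hfalse : ∀ k, K + 1 ≤ k → i k = false := by
      intro k hk
      by_contra hik
      have : i k = true := by revert hik; cases i k <;> simp
      have := hK this
      omega
    have hlin : ∀ j, nn (K + 1 + j) = nn (K + 1) + j := by
      intro j
      induction j with
      | zero => rfl
      | succ j ih =>
          have : nn (K + 1 + j + 1) = gstep f (nn (K + 1 + j)) (i (K + 1 + j)) :=
            play_succ f i (K + 1 + j)
          rw [hfalse (K + 1 + j) (by omega)] at this
          simp only [gstep, if_neg (by simp : ¬(false = true))] at this
          have harg : K + 1 + (j + 1) = K + 1 + j + 1 := by omega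
          rw [harg]
          omega
    have hcof : ∀ t, nn (K + 1) ≤ t → t ∈ Set.range nn := by
      intro t ht
      exact ⟨K + 1 + (t - nn (K + 1)), by rw [hlin]; omega⟩
    have hBfin : B.Finite := by
      apply (hfin.union (Set.finite_Iio (nn (K + 1)))).subset
      intro x hx
      rcases Nat.lt_or_ge x (nn (K + 1)) with hl | hg
      · exact Or.inr hl
      · exact Or.inl ⟨hx, hcof x hg⟩
    exact hBinf hBfin

theorem stmt7 (A : Set (Set ℕ)) (hA : ∀ B ∈ A, B.Infinite)
    (h : ¬ IWinStratReaping A) : frakR ≤ #A ∧ frakD ≤ #A := by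
  constructor
  · -- reaping part
    have hreapall : ∀ x : Set ℕ, ∃ B ∈ A, Reaps B x := by
      intro x
      rcases x.finite_or_infinite with hx | hx
      · obtain ⟨B, hB, _⟩ := exists_dominating A hA h (fun _ => 0)
        exact ⟨B, hB, Or.inr (hx.subset Set.inter_subset_right)⟩
      · have hx' : (setOf (· ∈ x)).Infinite := by exact hx
        set σ : List Bool → ℕ := fun l => Nat.nth (· ∈ x) l.length with hσ
        have heq : ∀ i : ℕ → Bool,
            (fun k => σ ((List.range k).map i)) = Nat.nth (· ∈ x) := by
          intro i; funext k; simp [hσ]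
        obtain ⟨i, hi⟩ : ∃ i, IIWinsReaping A (fun k => σ ((List.range k).map i)) i := by
          by_contra hc
          push_neg at hc
          refine h ⟨σ, fun i => ⟨?_, hc i⟩⟩
          rw [heq i]
          exact Nat.nth_strictMono hx'
        obtain ⟨B, hB, _, hre⟩ := hi
        refine ⟨B, hB, ?_⟩
        rwa [heq i, Nat.range_nth_of_infinite hx'] at hre
    exact csInf_le' ⟨A, hA, hreapall, rfl⟩
  · -- dominating part
    have hle : frakD ≤ #((fun B : Set ℕ => Nat.nth (· ∈ B)) '' A) := by
      refine csInf_le' ⟨_, fun g => ?_, rfl⟩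
      obtain ⟨B, hB, hd⟩ := exists_dominating A hA h g
      exact ⟨_, Set.mem_image_of_mem _ hB, hd⟩
    exact hle.trans Cardinal.mk_image_le
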